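/- For independent random variables V_1, …, V_n with V_i having density v ↦ q_i v^{q_i − 1} on (0, 1) (q_i > 0), and any permutation π of {1,…,n}, the probability P(V_{π(1)} > V_{π(2)} > ⋯ > V_{π(n)}) equals ∏_{i=1}^{n} q_{π(i)} / (∑_{j=i}^{n} q_{π(j)}). -/

import Mathlib

open Finset MeasureTheory ProbabilityTheory

noncomputable def pmu (a : ℝ) : Measure ℝ :=
  (volume.restrict (Set.Ioc 0 1)).withDensity fun t => ENNReal.ofReal (a * t ^ (a - 1))

lemma meas_rpow_const (c : ℝ) : Measurable fun s : ℝ => ENNReal.ofReal (s ^ c) := by fun_prop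

lemma lint_rpow (a : ℝ) (ha : 0 < a) (c : ℝ) (hc : 0 ≤ c) :
    ∫⁻ s in Set.Ioc 0 c, ENNReal.ofReal (s ^ (a - 1)) = ENNReal.ofReal (c ^ a / a) := by
  have hint : IntegrableOn (fun s : ℝ => s ^ (a - 1)) (Set.Ioc 0 c) volume := by
    have := intervalIntegral.intervalIntegrable_rpow' (a := 0) (b := c) (r := a - 1)
      (by linarith)
    rwa [intervalIntegrable_iff_integrableOn_Ioc_of_le hc] at this
  rw [← MeasureTheory.ofReal_integral_eq_lintegral_ofReal hint]
  · congr 1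
    rw [← intervalIntegral.integral_of_le hc, integral_rpow (Or.inl (by linarith))]
    rw [sub_add_cancel, Real.zero_rpow (ne_of_gt ha)]
    ring
  · filter_upwards [self_mem_ae_restrict measurableSet_Ioc] with s hs
    exact Real.rpow_nonneg hs.1.le _

lemma pmu_apply {a : ℝ} (ha : 0 < a) {s : Set ℝ} (hs : MeasurableSet s) :
    pmu a s = ENNReal.ofReal a * ∫⁻ x in s ∩ Set.Ioc 0 1, ENNReal.ofReal (x ^ (a - 1)) := by
  rw [pmu, withDensity_apply _ hs, Measure.restrict_restrict hs, ← lintegral_const_mul _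
    (meas_rpow_const (a - 1))]
  congr 1 with x
  rw [← ENNReal.ofReal_mul ha.le]

lemma pmu_Iic {a : ℝ} (ha : 0 < a) {t : ℝ} (h0 : 0 ≤ t) (h1 : t ≤ 1) :
    pmu a (Set.Iic t) = ENNReal.ofReal (t ^ a) := by
  rw [pmu_apply ha measurableSet_Iic]
  have : Set.Iic t ∩ Set.Ioc 0 1 = Set.Ioc 0 t := by
    ext x; simp only [Set.mem_inter_iff, Set.mem_Iic, Set.mem_Ioc]
    constructor
    · rintro ⟨h, h2, h3⟩; exact ⟨h2, h⟩
    · rintro ⟨h2, h3⟩; exact ⟨h3, h2, h3.trans h1⟩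
  rw [this, lint_rpow a ha t h0, ← ENNReal.ofReal_mul ha.le]
  congr 1
  field_simp

lemma pmu_univ {a : ℝ} (ha : 0 < a) : pmu a Set.univ = 1 := by
  rw [pmu_apply ha MeasurableSet.univ, Set.univ_inter, lint_rpow a ha 1 zero_le_one,
    Real.one_rpow, ← ENNReal.ofReal_mul ha.le]
  rw [mul_one_div, div_self (ne_of_gt ha), ENNReal.ofReal_one]

lemma pmu_prob {a : ℝ} (ha : 0 < a) : IsProbabilityMeasure (pmu a) := ⟨pmu_univ ha⟩

lemma pmu_Ici_one {a : ℝ} (ha : 0 < a) : pmu a (Set.Ici 1) = 0 := by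
  rw [pmu_apply ha measurableSet_Ici]
  have : Set.Ici (1:ℝ) ∩ Set.Ioc 0 1 = {1} := by
    ext x; simp only [Set.mem_inter_iff, Set.mem_Ici, Set.mem_Ioc, Set.mem_singleton_iff]
    constructor
    · rintro ⟨h, h2, h3⟩; linarith
    · rintro rfl; norm_num
  rw [this]
  simp [lintegral_singleton]

lemma strictAnti_cons {n : ℕ} (s : ℝ) (y : Fin n → ℝ) :
    StrictAnti (Fin.cons s y : Fin (n+1) → ℝ) ↔ StrictAnti y ∧ ∀ i, y i < s := by
  constructor
  · intro h
    refine ⟨fun i j hij => ?_, fun i => ?_⟩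
    · have := h (show (i.succ : Fin (n+1)) < j.succ from Fin.succ_lt_succ_iff.mpr hij)
      simpa using this
    · have := h (Fin.succ_pos i)
      simpa using this
  · rintro ⟨hy, hs⟩ i j hij
    rcases Fin.eq_zero_or_eq_succ j with rfl | ⟨j', rfl⟩
    · exact absurd hij (Fin.not_lt_zero i).elim
    rcases Fin.eq_zero_or_eq_succ i with rfl | ⟨i', rfl⟩
    · simpa using hs j'
    · simpa using hy (Fin.succ_lt_succ_iff.mp hij)

lemma measurableSet_strictAnti (n : ℕ) : MeasurableSet {x : Fin n → ℝ | StrictAnti x} := by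
  have : {x : Fin n → ℝ | StrictAnti x}
      = ⋂ (i : Fin n) (j : Fin n) (_ : i < j), {x : Fin n → ℝ | x j < x i} := by
    ext x
    simp only [Set.mem_setOf_eq, Set.mem_iInter]
    exact ⟨fun h i j hij => h hij, fun h i j hij => h i j hij⟩
  rw [this]
  exact MeasurableSet.iInter fun i => MeasurableSet.iInter fun j => MeasurableSet.iInter
    fun _ => measurableSet_lt (measurable_pi_apply j) (measurable_pi_apply i)

lemma measurableSet_antiSet (n : ℕ) (t : ℝ) :
    MeasurableSet {x : Fin n → ℝ | StrictAnti x ∧ ∀ i, x i < t} := by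
  refine (measurableSet_strictAnti n).inter (s₂ := {x : Fin n → ℝ | ∀ i, x i < t}) ?_
  have : {x : Fin n → ℝ | ∀ i, x i < t} = ⋂ i, {x : Fin n → ℝ | x i < t} := by
    ext x; simp
  rw [this]
  exact MeasurableSet.iInter fun i =>
    measurableSet_lt (measurable_pi_apply i) measurable_const

lemma Ici_succ_map {n : ℕ} (i : Fin n) :
    (Finset.Ici i).map ⟨Fin.succ, Fin.succ_injective n⟩ = Finset.Ici i.succ := by
  ext k
  simp only [Finset.mem_map, Finset.mem_Ici, Function.Embedding.coeFn_mk]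
  constructor
  · rintro ⟨j, hj, rfl⟩
    exact Fin.succ_le_succ_iff.mpr hj
  · intro hk
    obtain ⟨j, rfl⟩ := (Fin.exists_succ_eq (x := k)).mpr (fun h => by
      rw [h, Fin.le_zero_iff] at hk
      exact (Fin.succ_ne_zero i) hk)
    exact ⟨j, Fin.succ_le_succ_iff.mp hk, rfl⟩

lemma sum_Ici_succ {n : ℕ} (q : Fin (n+1) → ℝ) (i : Fin n) :
    ∑ j ∈ Finset.Ici i.succ, q j = ∑ j ∈ Finset.Ici i, q j.succ := by
  rw [← Ici_succ_map i, Finset.sum_map]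
  rfl

lemma prod_formula_succ {n : ℕ} (q : Fin (n+1) → ℝ) :
    ∏ i : Fin (n+1), q i / ∑ j ∈ Finset.Ici i, q j
      = (q 0 / ∑ j : Fin (n+1), q j)
        * ∏ i : Fin n, q i.succ / ∑ j ∈ Finset.Ici i, q j.succ := by
  rw [Fin.prod_univ_succ]
  congr 1
  · congr 1
    congr 1
    ext j
    simp [Fin.zero_le]
  · exact Finset.prod_congr rfl fun i _ => by rw [sum_Ici_succ]

lemma prod_formula_pos {n : ℕ} (q : Fin n → ℝ) (hq : ∀ i, 0 < q i) :
    0 < ∏ i : Fin n, q i / ∑ j ∈ Finset.Ici i, q j := by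
  refine Finset.prod_pos fun i _ => div_pos (hq i) ?_
  refine Finset.sum_pos (fun j _ => hq j) ⟨i, Finset.mem_Ici.mpr le_rfl⟩

lemma measurableSet_prodAnti (n : ℕ) (t : ℝ) :
    MeasurableSet {p : ℝ × (Fin n → ℝ) | (StrictAnti p.2 ∧ ∀ i, p.2 i < p.1) ∧ p.1 < t} := by
  have h : {p : ℝ × (Fin n → ℝ) | (StrictAnti p.2 ∧ ∀ i, p.2 i < p.1) ∧ p.1 < t}
      = (Prod.snd ⁻¹' {y : Fin n → ℝ | StrictAnti y})
        ∩ ((⋂ i, {p : ℝ × (Fin n → ℝ) | p.2 i < p.1}) ∩ {p : ℝ × (Fin n → ℝ) | p.1 < t}) := by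
    ext p
    simp only [Set.mem_setOf_eq, Set.mem_inter_iff, Set.mem_preimage, Set.mem_iInter]
    tauto
  rw [h]
  refine ((measurableSet_strictAnti n).preimage measurable_snd).inter
    ((MeasurableSet.iInter fun i =>
      measurableSet_lt ((measurable_pi_apply i).comp measurable_snd) measurable_fst).inter
      (measurableSet_lt measurable_fst measurable_const))

lemma key : ∀ (n : ℕ) (q : Fin n → ℝ), (∀ i, 0 < q i) → ∀ t : ℝ, 0 < t → t ≤ 1 →
    Measure.pi (fun i => pmu (q i)) {x | StrictAnti x ∧ ∀ i, x i < t}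
      = ENNReal.ofReal (t ^ (∑ i, q i) * ∏ i, q i / ∑ j ∈ Finset.Ici i, q j) := by
  intro n
  induction n with
  | zero =>
    intro q hq t ht0 ht1
    haveI : ∀ i, IsProbabilityMeasure (pmu (q i)) := fun i => pmu_prob (hq i)
    have h1 : {x : Fin 0 → ℝ | StrictAnti x ∧ ∀ i, x i < t} = Set.univ := by
      ext x
      simp only [Set.mem_setOf_eq, Set.mem_univ, iff_true]
      exact ⟨fun i => i.elim0, fun i => i.elim0⟩
    rw [h1]
    simp [Real.rpow_zero]
  | succ n IH =>
    intro q hq t ht0 ht1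
    haveI : ∀ i, IsProbabilityMeasure (pmu (q i)) := fun i => pmu_prob (hq i)
    haveI : ∀ j : Fin n, IsProbabilityMeasure (pmu (q j.succ)) := fun j => pmu_prob (hq j.succ)
    set B : ℝ := ∑ j : Fin n, q j.succ with hB
    set Cn : ℝ := ∏ i : Fin n, q i.succ / ∑ j ∈ Finset.Ici i, q j.succ with hCn
    have hCn_pos : 0 < Cn := prod_formula_pos _ (fun j => hq j.succ)
    have hBpos : 0 ≤ B := Finset.sum_nonneg fun j _ => (hq j.succ).le
    have hX : 0 < q 0 + B := add_pos_of_pos_of_nonneg (hq 0) hBpos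
    -- reduce to x 0 < t
    have hSS : {x : Fin (n+1) → ℝ | StrictAnti x ∧ ∀ i, x i < t}
        = {x : Fin (n+1) → ℝ | StrictAnti x ∧ x 0 < t} := by
      ext x
      simp only [Set.mem_setOf_eq]
      exact ⟨fun ⟨h, h2⟩ => ⟨h, h2 0⟩,
        fun ⟨h, h0⟩ => ⟨h, fun i => lt_of_le_of_lt (h.antitone (Fin.zero_le i)) h0⟩⟩
    set T : Set (ℝ × (Fin n → ℝ)) :=
      {p | (StrictAnti p.2 ∧ ∀ i, p.2 i < p.1) ∧ p.1 < t} with hTdef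
    have hT : MeasurableSet T := measurableSet_prodAnti n t
    have hmp := measurePreserving_piFinSuccAbove (fun i : Fin (n+1) => pmu (q i)) 0
    simp only [Fin.zero_succAbove] at hmp
    have key1 : Measure.pi (fun i => pmu (q i)) {x : Fin (n+1) → ℝ | StrictAnti x ∧ x 0 < t}
        = ((pmu (q 0)).prod (Measure.pi fun j : Fin n => pmu (q j.succ))) T := by
      rw [← hmp.measure_preimage_equiv T]
      congr 1
      ext x
      have hx := strictAnti_cons (x 0) (Fin.tail x)
      rw [Fin.cons_self_tail] at hx
      constructor
      · intro hmem
        exact ⟨hx.mp hmem.1, hmem.2⟩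
      · intro hmem
        obtain ⟨⟨h1, h2⟩, h3⟩ := hmem
        exact ⟨hx.mpr ⟨h1, h2⟩, h3⟩
    rw [hSS, key1, Measure.prod_apply hT]
    have hslice : (fun s => (Measure.pi fun j : Fin n => pmu (q j.succ)) (Prod.mk s ⁻¹' T))
        = (Set.Iio t).indicator
            (fun s => (Measure.pi fun j : Fin n => pmu (q j.succ))
              {y : Fin n → ℝ | StrictAnti y ∧ ∀ i, y i < s}) := by
      funext s
      by_cases h : s < t
      · have : Prod.mk s ⁻¹' T = {y : Fin n → ℝ | StrictAnti y ∧ ∀ i, y i < s} := by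
          ext y; simp [hTdef, h]
        rw [this, Set.indicator_of_mem (Set.mem_Iio.mpr h)]
      · have : Prod.mk s ⁻¹' T = ∅ := by
          ext y; simp [hTdef, h]
        rw [this, Set.indicator_of_notMem (by simpa using h)]
        simp
    rw [hslice, lintegral_indicator measurableSet_Iio]
    rw [pmu, restrict_withDensity measurableSet_Iio, Measure.restrict_restrict measurableSet_Iio]
    have hIoo : Set.Iio t ∩ Set.Ioc 0 1 = Set.Ioo 0 t := by
      ext x
      simp only [Set.mem_inter_iff, Set.mem_Iio, Set.mem_Ioc, Set.mem_Ioo]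
      exact ⟨fun ⟨h1, h2, h3⟩ => ⟨h2, h1⟩, fun ⟨h2, h1⟩ => ⟨h1, h2, le_trans h1.le ht1⟩⟩
    rw [hIoo, lintegral_withDensity_eq_lintegral_mul_non_measurable _ (by fun_prop)
      (Filter.Eventually.of_forall fun _ => ENNReal.ofReal_lt_top)]
    have hcong : ∫⁻ s in Set.Ioo 0 t,
        ((fun s => ENNReal.ofReal (q 0 * s ^ (q 0 - 1))) *
          fun s => (Measure.pi fun j : Fin n => pmu (q j.succ))
            {y : Fin n → ℝ | StrictAnti y ∧ ∀ i, y i < s}) s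
        = ∫⁻ s in Set.Ioo 0 t,
            ENNReal.ofReal (q 0 * Cn) * ENNReal.ofReal (s ^ (q 0 + B - 1)) := by
      refine setLIntegral_congr_fun measurableSet_Ioo ?_
      intro s hs
      have hs0 : 0 < s := hs.1
      have hs1 : s ≤ 1 := le_trans hs.2.le ht1
      rw [Pi.mul_apply, IH (fun j => q j.succ) (fun j => hq j.succ) s hs0 hs1]
      rw [← ENNReal.ofReal_mul (mul_nonneg (hq 0).le (Real.rpow_nonneg hs0.le _))]
      dsimp only
      rw [← ENNReal.ofReal_mul (mul_nonneg (hq 0).le hCn_pos.le)]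
      congr 1
      rw [show q 0 + B - 1 = (q 0 - 1) + B by ring, Real.rpow_add hs0]
      ring
    rw [hcong, lintegral_const_mul _ (meas_rpow_const _),
      setLIntegral_congr (Ioo_ae_eq_Ioc (a := (0:ℝ)) (b := t)),
      lint_rpow _ hX t ht0.le,
      ← ENNReal.ofReal_mul (mul_nonneg (hq 0).le hCn_pos.le)]
    congr 1
    rw [prod_formula_succ, Fin.sum_univ_succ, ← hB, ← hCn]
    field_simp

theorem power_law_decreasing_order_probability (n : ℕ) {Ω : Type*} [MeasureSpace Ω]
    (P : Measure Ω) [IsProbabilityMeasure P]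
    (q : Fin n → ℝ) (hq : ∀ i, 0 < q i)
    (V : Fin n → Ω → ℝ) (hVm : ∀ i, Measurable (V i))
    (hindep : iIndepFun V P)
    (hcdf : ∀ i, ∀ t ∈ Set.Icc (0 : ℝ) 1, (P {ω | V i ω ≤ t}).toReal = t ^ q i)
    (π : Equiv.Perm (Fin n)) :
    (P {ω | StrictAnti fun i => V (π i) ω}).toReal =
      ∏ i : Fin n, q (π i) / ∑ j ∈ Finset.Ici i, q (π j) := by
  have hqπ : ∀ i, 0 < q (π i) := fun i => hq _
  haveI : ∀ i : Fin n, IsProbabilityMeasure (pmu (q (π i))) := fun i => pmu_prob (hqπ i)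
  haveI : ∀ i : Fin n, IsProbabilityMeasure (pmu (q i)) := fun i => pmu_prob (hq i)
  -- marginal laws
  have hlaw : ∀ i, P.map (V i) = pmu (q i) := by
    intro i
    haveI : IsProbabilityMeasure (P.map (V i)) :=
      Measure.isProbabilityMeasure_map (hVm i).aemeasurable
    refine MeasureTheory.Measure.ext_of_Iic (P.map (V i)) (pmu (q i)) fun t => ?_
    have hPt : ∀ u : ℝ, P.map (V i) (Set.Iic u) = P {ω | V i ω ≤ u} := fun u => by
      rw [Measure.map_apply (hVm i) measurableSet_Iic]; rfl
    rcases le_or_gt t 0 with h | h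
    · have h0 : P {ω | V i ω ≤ 0} = 0 := by
        have h1 := hcdf i 0 ⟨le_rfl, zero_le_one⟩
        rw [Real.zero_rpow (hq i).ne'] at h1
        rcases (ENNReal.toReal_eq_zero_iff _).mp h1 with h2 | h2
        · exact h2
        · exact absurd h2 (measure_ne_top P _)
      have hle : P.map (V i) (Set.Iic t) = 0 := by
        refine le_antisymm ?_ zero_le
        rw [hPt t, ← h0]
        exact measure_mono fun ω hω => le_trans hω h
      rw [hle]
      rw [pmu_apply (hq i) measurableSet_Iic]
      have : Set.Iic t ∩ Set.Ioc (0:ℝ) 1 = ∅ := by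
        apply Set.eq_empty_iff_forall_notMem.mpr
        rintro x ⟨hx, hx1, hx2⟩
        rw [Set.mem_Iic] at hx
        linarith
      rw [this]
      simp
    · rcases le_or_gt t 1 with h1 | h1
      · rw [hPt, pmu_Iic (hq i) h.le h1]
        rw [← hcdf i t ⟨h.le, h1⟩, ENNReal.ofReal_toReal (measure_ne_top P _)]
      · have hP1 : P {ω | V i ω ≤ 1} = 1 := by
          have h2 := hcdf i 1 ⟨zero_le_one, le_rfl⟩
          rw [Real.one_rpow] at h2
          exact (ENNReal.toReal_eq_one_iff _).mp h2
        have hL : P.map (V i) (Set.Iic t) = 1 := by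
          refine le_antisymm prob_le_one ?_
          rw [hPt t, ← hP1]
          exact measure_mono fun ω hω => le_trans hω h1.le
        have hR : pmu (q i) (Set.Iic t) = 1 := by
          refine le_antisymm prob_le_one ?_
          have : pmu (q i) (Set.Iic 1) = 1 := by
            rw [pmu_Iic (hq i) zero_le_one le_rfl, Real.one_rpow, ENNReal.ofReal_one]
          rw [← this]
          exact measure_mono (Set.Iic_subset_Iic.mpr h1.le)
        rw [hL, hR]
  -- joint law
  set f : Ω → (Fin n → ℝ) := fun ω i => V (π i) ω with hf
  have hfm : Measurable f := measurable_pi_lambda _ fun i => hVm (π i)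
  have hmap : P.map f = Measure.pi (fun i => pmu (q (π i))) := by
    refine (Measure.pi_eq fun s hs => ?_).symm
    rw [Measure.map_apply hfm (MeasurableSet.univ_pi hs)]
    have hpre : f ⁻¹' Set.pi Set.univ s = ⋂ k, V k ⁻¹' s (π.symm k) := by
      ext ω
      simp only [hf, Set.mem_preimage, Set.mem_univ_pi, Set.mem_iInter]
      constructor
      · intro h k
        have := h (π.symm k)
        simpa using this
      · intro h i
        have := h (π i)
        rwa [Equiv.symm_apply_apply] at this
    have hbi : (⋂ k, V k ⁻¹' s (π.symm k)) = ⋂ k ∈ Finset.univ, V k ⁻¹' s (π.symm k) := by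
      simp
    rw [hpre, hbi, (iIndepFun_iff_measure_inter_preimage_eq_mul.mp hindep) Finset.univ
      (fun k _ => hs (π.symm k))]
    have hterm : ∀ k, P (V k ⁻¹' s (π.symm k)) = pmu (q k) (s (π.symm k)) := fun k => by
      rw [← hlaw k, Measure.map_apply (hVm k) (hs _)]
    calc ∏ k : Fin n, P (V k ⁻¹' s (π.symm k))
        = ∏ k : Fin n, pmu (q k) (s (π.symm k)) := Finset.prod_congr rfl fun k _ => hterm k
      _ = ∏ i : Fin n, pmu (q (π i)) (s (π.symm (π i))) :=
          (Equiv.prod_comp π (fun k => pmu (q k) (s (π.symm k)))).symm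
      _ = ∏ i : Fin n, pmu (q (π i)) (s i) := by
          refine Finset.prod_congr rfl fun i _ => by rw [Equiv.symm_apply_apply]
  have hev : {ω | StrictAnti fun i => V (π i) ω} = f ⁻¹' {x : Fin n → ℝ | StrictAnti x} := rfl
  rw [hev, ← Measure.map_apply hfm (measurableSet_strictAnti n), hmap]
  -- removing the null part above 1
  have h0 : Measure.pi (fun i => pmu (q (π i))) (⋃ i, {x : Fin n → ℝ | 1 ≤ x i}) = 0 := by
    refine measure_iUnion_null fun i => ?_
    have hset : {x : Fin n → ℝ | 1 ≤ x i}
        = Set.pi Set.univ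
            (Function.update (fun _ : Fin n => (Set.univ : Set ℝ)) i (Set.Ici 1)) := by
      ext x
      simp only [Set.mem_setOf_eq, Set.mem_univ_pi]
      constructor
      · intro h j
        rcases eq_or_ne j i with rfl | hne
        · simpa using h
        · simp [Function.update_of_ne hne]
      · intro h
        have := h i
        simpa using this
    rw [hset, Measure.pi_pi]
    refine Finset.prod_eq_zero (Finset.mem_univ i) ?_
    simp [pmu_Ici_one (hqπ i)]
  have hmeq : Measure.pi (fun i => pmu (q (π i))) {x : Fin n → ℝ | StrictAnti x}
      = Measure.pi (fun i => pmu (q (π i))) {x : Fin n → ℝ | StrictAnti x ∧ ∀ i, x i < 1} := by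
    refine le_antisymm ?_ (measure_mono fun x hx => hx.1)
    have hsub : {x : Fin n → ℝ | StrictAnti x}
        ⊆ {x : Fin n → ℝ | StrictAnti x ∧ ∀ i, x i < 1} ∪ ⋃ i, {x : Fin n → ℝ | 1 ≤ x i} := by
      intro x hx
      by_cases h : ∀ i, x i < 1
      · exact Or.inl ⟨hx, h⟩
      · push_neg at h
        obtain ⟨i, hi⟩ := h
        exact Or.inr (Set.mem_iUnion.mpr ⟨i, hi⟩)
    calc Measure.pi (fun i => pmu (q (π i))) {x : Fin n → ℝ | StrictAnti x}
        ≤ Measure.pi (fun i => pmu (q (π i)))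
            ({x : Fin n → ℝ | StrictAnti x ∧ ∀ i, x i < 1} ∪ ⋃ i, {x : Fin n → ℝ | 1 ≤ x i}) :=
          measure_mono hsub
      _ ≤ Measure.pi (fun i => pmu (q (π i))) {x : Fin n → ℝ | StrictAnti x ∧ ∀ i, x i < 1}
          + Measure.pi (fun i => pmu (q (π i))) (⋃ i, {x : Fin n → ℝ | 1 ≤ x i}) :=
          measure_union_le _ _
      _ = _ := by rw [h0, add_zero]
  rw [hmeq, key n (fun i => q (π i)) hqπ 1 one_pos le_rfl]
  rw [Real.one_rpow, one_mul, ENNReal.toReal_ofReal (prod_formula_pos _ hqπ).le]
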